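/- For every p ∈ ℝ³, the integral ∫_{ℝ³} dq / ((q·(p−q))² + |q|² + |p−q|² + 1) is finite, and the supremum over all p ∈ ℝ³ of this integral is finite. -/

import Mathlib

open MeasureTheory
open scoped ENNReal

open Set Function Metric Real in
private lemma polar3 (f : ℝ → ℝ≥0∞) (hf : Measurable f) :
    ∫⁻ x : EuclideanSpace ℝ (Fin 3), f ‖x‖ =
      (volume : Measure (EuclideanSpace ℝ (Fin 3))).toSphere Set.univ *
        ∫⁻ r in Set.Ioi (0:ℝ), ENNReal.ofReal (r ^ 2) * f r := by
  have hdim : Module.finrank ℝ (EuclideanSpace ℝ (Fin 3)) = 3 := by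
    simp [finrank_euclideanSpace]
  set E3 := EuclideanSpace ℝ (Fin 3)
  set μ : Measure E3 := volume with hμ
  have hm1 : Measurable fun x : ↑(sphere (0:E3) 1) × ↑(Ioi (0:ℝ)) => f ↑x.2 :=
    (hf.comp measurable_subtype_coe).comp measurable_snd
  have hm2 : Measurable fun r : ↑(Ioi (0:ℝ)) => f ↑r := hf.comp measurable_subtype_coe
  calc
    ∫⁻ x : E3, f ‖x‖ = ∫⁻ x in ({(0:E3)}ᶜ : Set E3), f ‖x‖ ∂μ := by
      rw [restrict_compl_singleton]
    _ = ∫⁻ x : ({(0:E3)}ᶜ : Set E3), f ‖x.1‖ ∂(μ.comap (↑)) :=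
      (lintegral_subtype_comap (measurableSet_singleton _).compl (fun x => f ‖x‖)).symm
    _ = ∫⁻ x : ↑(sphere (0:E3) 1) × ↑(Ioi (0:ℝ)), f ↑x.2
        ∂(μ.toSphere.prod (.volumeIoiPow (Module.finrank ℝ E3 - 1))) :=
      by
        have := (μ.measurePreserving_homeomorphUnitSphereProd).lintegral_comp hm1
        simp only [homeomorphUnitSphereProd_apply_snd_coe] at this
        exact this
    _ = μ.toSphere Set.univ *
        ∫⁻ r : ↑(Ioi (0:ℝ)), f ↑r ∂(Measure.volumeIoiPow (Module.finrank ℝ E3 - 1)) := by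
      rw [MeasureTheory.lintegral_prod _ hm1.aemeasurable]
      simp [lintegral_const, mul_comm]
    _ = μ.toSphere Set.univ * ∫⁻ r in Set.Ioi (0:ℝ), ENNReal.ofReal (r ^ 2) * f r := by
      congr 1
      have hd : Measurable fun r : ↑(Ioi (0:ℝ)) => ENNReal.ofReal ((r : ℝ) ^ 2) :=
        ((measurable_subtype_coe : Measurable (Subtype.val : Ioi (0:ℝ) → ℝ)).pow_const
          2).ennreal_ofReal
      rw [hdim]
      calc ∫⁻ r : ↑(Ioi (0:ℝ)), f ↑r ∂(Measure.volumeIoiPow (3 - 1))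
          = ∫⁻ r : ↑(Ioi (0:ℝ)), ENNReal.ofReal ((r : ℝ) ^ 2) * f ↑r
            ∂(Measure.comap Subtype.val volume) :=
            lintegral_withDensity_eq_lintegral_mul _ hd hm2
        _ = ∫⁻ r in Set.Ioi (0:ℝ), ENNReal.ofReal (r ^ 2) * f r :=
            lintegral_subtype_comap measurableSet_Ioi
              (fun r => ENNReal.ofReal (r ^ 2) * f r)

private lemma keyineq (s r : ℝ) (hs : 0 ≤ s) (hr : 0 ≤ r) :
    r ^ 2 * (1 / ((s - r ^ 2) ^ 2 + 2 * r ^ 2 + 2 * s + 1)) ≤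
      4 * (1 + r ^ 2)⁻¹ + ((r - Real.sqrt s) ^ 2 + 1)⁻¹ := by
  set t := r ^ 2 with ht
  set a := Real.sqrt s with ha
  have ha2 : a ^ 2 = s := Real.sq_sqrt hs
  have ha0 : 0 ≤ a := Real.sqrt_nonneg s
  have ht0 : 0 ≤ t := sq_nonneg r
  set D := (s - t) ^ 2 + 2 * t + 2 * s + 1 with hD
  have hDpos : 0 < D := by positivity
  have hterm2 : 0 ≤ ((r - a) ^ 2 + 1)⁻¹ := by positivity
  have hterm1 : 0 ≤ 4 * (1 + t)⁻¹ := by positivity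
  by_cases h : t ≤ s / 2 ∨ 2 * s ≤ t
  · have h1 : t ^ 2 / 4 ≤ (s - t) ^ 2 := by
      rcases h with h | h
      · nlinarith
      · nlinarith
    have A : t / D ≤ 4 / (1 + t) := by
      rw [div_le_div_iff₀ hDpos (by positivity)]
      nlinarith
    calc t * (1 / D) = t / D := by ring
      _ ≤ 4 / (1 + t) := A
      _ = 4 * (1 + t)⁻¹ := by ring
      _ ≤ _ := le_add_of_nonneg_right hterm2
  · push_neg at h
    obtain ⟨h1, h2⟩ := h
    have hs0 : 0 < s := by nlinarith
    have har : a / 2 ≤ r := by nlinarith [sq_nonneg (r - a / 2), sq_nonneg (r + a / 2)]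
    have hsum : 2 * s ≤ (a + r) ^ 2 := by nlinarith [mul_le_mul_of_nonneg_left har ha0]
    have hid : (s - t) ^ 2 = (r - a) ^ 2 * (a + r) ^ 2 := by rw [← ha2]; ring
    have hkey : t * ((r - a) ^ 2 + 1) ≤ D := by
      have e1 : (r - a) ^ 2 * t ≤ (r - a) ^ 2 * (2 * s) :=
        mul_le_mul_of_nonneg_left h2.le (sq_nonneg _)
      have e2 : (r - a) ^ 2 * (2 * s) ≤ (r - a) ^ 2 * (a + r) ^ 2 :=
        mul_le_mul_of_nonneg_left hsum (sq_nonneg _)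
      nlinarith
    have B : t / D ≤ 1 / ((r - a) ^ 2 + 1) := by
      rw [div_le_div_iff₀ hDpos (by positivity)]
      linarith
    calc t * (1 / D) = t / D := by ring
      _ ≤ 1 / ((r - a) ^ 2 + 1) := B
      _ = ((r - a) ^ 2 + 1)⁻¹ := by ring
      _ ≤ _ := le_add_of_nonneg_left hterm1

private lemma denom_eq (c u : EuclideanSpace ℝ (Fin 3)) :
    (inner ℝ (u + c) ((c + c) - (u + c)) : ℝ) ^ 2 + ‖u + c‖ ^ 2 + ‖(c + c) - (u + c)‖ ^ 2 + 1
      = (‖c‖ ^ 2 - ‖u‖ ^ 2) ^ 2 + 2 * ‖u‖ ^ 2 + 2 * ‖c‖ ^ 2 + 1 := by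
  have h1 : (c + c) - (u + c) = c - u := by abel
  rw [h1]
  have h2 : (inner ℝ (u + c) (c - u) : ℝ) = ‖c‖ ^ 2 - ‖u‖ ^ 2 := by
    rw [inner_sub_right, inner_add_left, inner_add_left, real_inner_self_eq_norm_sq,
      real_inner_self_eq_norm_sq, real_inner_comm c u]
    ring
  rw [h2, norm_add_sq_real, norm_sub_sq_real, real_inner_comm c u]
  ring

open Real in
private lemma cauchy_lintegral (a : ℝ) :
    ∫⁻ x : ℝ, ENNReal.ofReal (((x - a) ^ 2 + 1)⁻¹) = ENNReal.ofReal π := by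
  have h0 : (fun x : ℝ => ENNReal.ofReal (((x - a) ^ 2 + 1)⁻¹)) =
      fun x : ℝ => (fun y : ℝ => ENNReal.ofReal ((1 + y ^ 2)⁻¹)) (x + (-a)) := by
    funext x; rw [← sub_eq_add_neg, add_comm]
  rw [h0, lintegral_add_right_eq_self (fun y : ℝ => ENNReal.ofReal ((1 + y ^ 2)⁻¹)) (-a),
    ← ofReal_integral_eq_lintegral_ofReal integrable_inv_one_add_sq
      (Filter.Eventually.of_forall fun x => by positivity),
    integral_univ_inv_one_add_sq]

open Real in
private lemma first_lintegral :
    ∫⁻ x : ℝ, ENNReal.ofReal (4 * (1 + x ^ 2)⁻¹) = ENNReal.ofReal (4 * π) := by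
  rw [← ofReal_integral_eq_lintegral_ofReal (integrable_inv_one_add_sq.const_mul 4)
      (Filter.Eventually.of_forall fun x => by positivity),
    MeasureTheory.integral_const_mul, integral_univ_inv_one_add_sq]

/-- For every `p ∈ ℝ³`, the integral
`∫ dq / ((q·(p−q))² + |q|² + |p−q|² + 1)` is finite, and the supremum over `p`
of these integrals is finite. -/
theorem stmt_0 :
    (∀ p : EuclideanSpace ℝ (Fin 3),
      (∫⁻ q : EuclideanSpace ℝ (Fin 3),
        ENNReal.ofReal
          (1 / ((inner ℝ q (p - q) : ℝ) ^ 2 + ‖q‖ ^ 2 + ‖p - q‖ ^ 2 + 1))) < ⊤) ∧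
    ∃ C : ℝ≥0∞, C < ⊤ ∧ ∀ p : EuclideanSpace ℝ (Fin 3),
      (∫⁻ q : EuclideanSpace ℝ (Fin 3),
        ENNReal.ofReal
          (1 / ((inner ℝ q (p - q) : ℝ) ^ 2 + ‖q‖ ^ 2 + ‖p - q‖ ^ 2 + 1))) ≤ C := by
  set S := (volume : Measure (EuclideanSpace ℝ (Fin 3))).toSphere Set.univ with hS
  set K := ENNReal.ofReal (4 * Real.pi) + ENNReal.ofReal Real.pi with hK
  have hCtop : S * K < ⊤ :=
    ENNReal.mul_lt_top (measure_lt_top _ _)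
      (ENNReal.add_lt_top.2 ⟨ENNReal.ofReal_lt_top, ENNReal.ofReal_lt_top⟩)
  have key : ∀ p : EuclideanSpace ℝ (Fin 3),
      (∫⁻ q : EuclideanSpace ℝ (Fin 3),
        ENNReal.ofReal
          (1 / ((inner ℝ q (p - q) : ℝ) ^ 2 + ‖q‖ ^ 2 + ‖p - q‖ ^ 2 + 1))) ≤ S * K := by
    intro p
    set c : EuclideanSpace ℝ (Fin 3) := (2:ℝ)⁻¹ • p with hc
    have hp : c + c = p := by rw [hc, ← add_smul]; norm_num
    have hs0 : (0:ℝ) ≤ ‖c‖ ^ 2 := sq_nonneg _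
    set a := Real.sqrt (‖c‖ ^ 2) with hadef
    set g : ℝ → ℝ≥0∞ := fun r =>
      ENNReal.ofReal (1 / ((‖c‖ ^ 2 - r ^ 2) ^ 2 + 2 * r ^ 2 + 2 * ‖c‖ ^ 2 + 1)) with hg
    have hgm : Measurable g := by
      apply Measurable.ennreal_ofReal
      exact measurable_const.div (by fun_prop)
    have step1 : (∫⁻ q : EuclideanSpace ℝ (Fin 3),
        ENNReal.ofReal
          (1 / ((inner ℝ q (p - q) : ℝ) ^ 2 + ‖q‖ ^ 2 + ‖p - q‖ ^ 2 + 1)))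
        = ∫⁻ u : EuclideanSpace ℝ (Fin 3), g ‖u‖ := by
      rw [← lintegral_add_right_eq_self
        (fun q : EuclideanSpace ℝ (Fin 3) => ENNReal.ofReal
          (1 / ((inner ℝ q (p - q) : ℝ) ^ 2 + ‖q‖ ^ 2 + ‖p - q‖ ^ 2 + 1))) c]
      refine lintegral_congr fun u => ?_
      simp only [hg]
      rw [← hp, denom_eq c u]
    rw [step1, polar3 g hgm]
    have h1 : (∫⁻ r in Set.Ioi (0:ℝ), ENNReal.ofReal (r ^ 2) * g r) ≤ K := by
      have mono1 : ∀ r ∈ Set.Ioi (0:ℝ), ENNReal.ofReal (r ^ 2) * g r ≤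
          ENNReal.ofReal (4 * (1 + r ^ 2)⁻¹) + ENNReal.ofReal (((r - a) ^ 2 + 1)⁻¹) := by
        intro r hr
        simp only [hg]
        rw [← ENNReal.ofReal_mul (sq_nonneg r)]
        refine le_trans (ENNReal.ofReal_le_ofReal
          (keyineq (‖c‖ ^ 2) r hs0 (le_of_lt hr))) ?_
        exact ENNReal.ofReal_add_le
      calc (∫⁻ r in Set.Ioi (0:ℝ), ENNReal.ofReal (r ^ 2) * g r)
          ≤ ∫⁻ r in Set.Ioi (0:ℝ), (ENNReal.ofReal (4 * (1 + r ^ 2)⁻¹)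
              + ENNReal.ofReal (((r - a) ^ 2 + 1)⁻¹)) :=
            setLIntegral_mono (by fun_prop) mono1
        _ ≤ ∫⁻ r : ℝ, (ENNReal.ofReal (4 * (1 + r ^ 2)⁻¹)
              + ENNReal.ofReal (((r - a) ^ 2 + 1)⁻¹)) := setLIntegral_le_lintegral _ _
        _ = (∫⁻ r : ℝ, ENNReal.ofReal (4 * (1 + r ^ 2)⁻¹))
              + ∫⁻ r : ℝ, ENNReal.ofReal (((r - a) ^ 2 + 1)⁻¹) :=
            lintegral_add_left (by fun_prop) _
        _ = K := by rw [first_lintegral, cauchy_lintegral a]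
    exact mul_le_mul_right h1 S
  exact ⟨fun p => lt_of_le_of_lt (key p) hCtop, S * K, hCtop, key⟩
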